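/- arXiv:2406.12799 — 2 statements merged into one kernel-verified Lean document; each statement's English description precedes it below -/
import Mathlib

section
/- Let M be a matroid on a finite ground set U, let N ⊆ U, let b > 0 and c > 0 be reals, and let x : U → [0,1] satisfy Σ_{e∈N} x(e) ≤ b · rank(N). Let μ be a probability measure on the powerset of U such that μ{ R ⊆ U : e ∈ R } = x(e) for every e ∈ N. Let r ≥ 1 and let e₁, e₂, …, e_r be distinct elements of N such that {e₁, …, e_r} is independent in M and such that for every i ∈ {1, …, r}, μ{ R ⊆ U : e_i ∈ span(((R ∩ N) ∪ {e₁, …, e_{i−1}}) \ {e_i}) } > c. Then c · r < b · rank(N). -/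
open Classical

/-- A matroid on a finite ground set `α`, given by its independent sets. -/
structure FinMatroid (α : Type*) [DecidableEq α] [Fintype α] where
  /-- The independent sets. -/
  Indep : Finset α → Prop
  indep_empty : Indep ∅
  indep_subset : ∀ ⦃I J : Finset α⦄, Indep J → I ⊆ J → Indep I
  indep_exchange : ∀ ⦃I J : Finset α⦄, Indep I → Indep J → I.card < J.card →
    ∃ e ∈ J, e ∉ I ∧ Indep (insert e I)

namespace FinMatroid

variable {α : Type*} [DecidableEq α] [Fintype α]

/-- A basis of the matroid: a maximal independent set. -/
def Base (M : FinMatroid α) (B : Finset α) : Prop :=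
  M.Indep B ∧ ∀ e : α, e ∉ B → ¬ M.Indep (insert e B)

/-- The rank of a set: the size of a largest independent subset. -/
noncomputable def rank (M : FinMatroid α) (S : Finset α) : ℕ :=
  (S.powerset.filter M.Indep).sup Finset.card

/-- The span of a set: the elements whose insertion does not increase the rank. -/
noncomputable def span (M : FinMatroid α) (S : Finset α) : Finset α :=
  Finset.univ.filter fun e => M.rank (insert e S) = M.rank S

lemma rank_mono (M : FinMatroid α) {S T : Finset α} (h : S ⊆ T) : M.rank S ≤ M.rank T :=
  Finset.sup_mono (Finset.filter_subset_filter _ (Finset.powerset_mono.2 h))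

lemma le_rank_of_indep (M : FinMatroid α) {I S : Finset α} (hI : M.Indep I) (hIS : I ⊆ S) :
    I.card ≤ M.rank S :=
  Finset.le_sup (by simp [Finset.mem_filter, Finset.mem_powerset, hI, hIS])

lemma rank_le_card (M : FinMatroid α) (S : Finset α) : M.rank S ≤ S.card :=
  Finset.sup_le fun I hI =>
    Finset.card_le_card (Finset.mem_powerset.1 (Finset.mem_filter.1 hI).1)

lemma rank_insert_le (M : FinMatroid α) (a : α) (S : Finset α) :
    M.rank (insert a S) ≤ M.rank S + 1 := by
  refine Finset.sup_le fun I hI => ?_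
  obtain ⟨hIs, hInd⟩ := Finset.mem_filter.1 hI
  rw [Finset.mem_powerset] at hIs
  have h1 : I.erase a ⊆ S := by
    intro x hx
    have hxI := Finset.mem_of_mem_erase hx
    have hxa := Finset.ne_of_mem_erase hx
    rcases Finset.mem_insert.1 (hIs hxI) with h | h
    · exact absurd h hxa
    · exact h
  have h2 : (I.erase a).card ≤ M.rank S :=
    M.le_rank_of_indep (M.indep_subset hInd (Finset.erase_subset _ _)) h1
  have h3 : I.card ≤ (I.erase a).card + 1 := by
    have := Finset.card_insert_le a (I.erase a)
    have h4 : I ⊆ insert a (I.erase a) := by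
      intro x hx
      by_cases hxa : x = a
      · simp [hxa]
      · exact Finset.mem_insert_of_mem (Finset.mem_erase.2 ⟨hxa, hx⟩)
    calc I.card ≤ (insert a (I.erase a)).card := Finset.card_le_card h4
      _ ≤ (I.erase a).card + 1 := Finset.card_insert_le _ _
  omega

lemma mem_span_iff (M : FinMatroid α) (a : α) (S : Finset α) :
    a ∈ M.span S ↔ M.rank (insert a S) = M.rank S := by
  simp [span]

end FinMatroid

open FinMatroid Finset

lemma key_count {α : Type*} [DecidableEq α] [Fintype α] (M : FinMatroid α)
    (S : Finset α) (r : ℕ) (e : Fin r → α) (hinj : Function.Injective e)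
    (hind : M.Indep (Finset.univ.image e)) :
    (Finset.univ.filter (fun i : Fin r =>
      e i ∈ M.span ((S ∪ ((Finset.univ.filter (fun j : Fin r => j < i)).image e)).erase (e i)))).card
      ≤ S.card := by
  set E : ℕ → Finset α := fun k => (Finset.univ.filter (fun j : Fin r => (j : ℕ) < k)).image e with hE
  set g : ℕ → ℕ := fun k => M.rank (S ∪ E k) with hg
  have hEfin : ∀ i : Fin r, (Finset.univ.filter (fun j : Fin r => j < i)).image e = E (i : ℕ) := by
    intro i; congr 1
  have hEsucc : ∀ i : Fin r, E ((i : ℕ) + 1) = insert (e i) (E (i : ℕ)) := by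
    intro i
    ext a
    simp only [hE, Finset.mem_image, Finset.mem_filter, Finset.mem_univ, true_and,
      Finset.mem_insert, Nat.lt_succ_iff_lt_or_eq]
    constructor
    · rintro ⟨j, hj | hj, rfl⟩
      · exact Or.inr ⟨j, hj, rfl⟩
      · exact Or.inl (by rw [Fin.val_eq_val] at hj; rw [hj])
    · rintro (rfl | ⟨j, hj, rfl⟩)
      · exact ⟨i, Or.inr rfl, rfl⟩
      · exact ⟨j, Or.inl hj, rfl⟩
  set cond : Fin r → Prop := fun i =>
    e i ∈ M.span ((S ∪ E (i : ℕ)).erase (e i)) with hcond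
  have hstep_eq : ∀ i : Fin r, cond i → g ((i : ℕ) + 1) = g (i : ℕ) := by
    intro i hi
    rw [hcond] at hi
    rw [M.mem_span_iff] at hi
    have h1 : insert (e i) ((S ∪ E (i : ℕ)).erase (e i)) = insert (e i) (S ∪ E (i : ℕ)) := by
      ext a; by_cases ha : a = e i <;> simp [ha]
    have h2 : S ∪ E ((i : ℕ) + 1) = insert (e i) (S ∪ E (i : ℕ)) := by
      rw [hEsucc i, Finset.union_insert]
    have hle : g ((i : ℕ) + 1) ≤ g (i : ℕ) := by
      rw [hg]
      simp only
      rw [h2, ← h1, hi]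
      exact M.rank_mono (Finset.erase_subset _ _)
    have hge : g (i : ℕ) ≤ g ((i : ℕ) + 1) := by
      apply M.rank_mono
      apply Finset.union_subset_union_right
      intro a ha
      simp only [hE, Finset.mem_image, Finset.mem_filter, Finset.mem_univ, true_and] at ha ⊢
      obtain ⟨j, hj, rfl⟩ := ha
      exact ⟨j, by omega, rfl⟩
    omega
  have hstep_le : ∀ i : Fin r, g ((i : ℕ) + 1) ≤ g (i : ℕ) + 1 := by
    intro i
    rw [hg]
    simp only
    rw [hEsucc i, Finset.union_insert]
    exact M.rank_insert_le _ _
  have hmono : Monotone g := by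
    apply monotone_nat_of_le_succ
    intro k
    apply M.rank_mono
    apply Finset.union_subset_union_right
    intro a ha
    simp only [hE, Finset.mem_image, Finset.mem_filter, Finset.mem_univ, true_and] at ha ⊢
    obtain ⟨j, hj, rfl⟩ := ha
    exact ⟨j, by omega, rfl⟩
  -- telescoping
  have htel : ∑ i ∈ Finset.range r, (g (i + 1) - g i) = g r - g 0 :=
    Finset.sum_range_tsub (fun a b h => hmono h) r
  set K := (Finset.univ.filter (fun i : Fin r => cond i)).card with hK
  have hsum_le : ∑ i ∈ Finset.range r, (g (i + 1) - g i) ≤ r - K := by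
    rw [← Fin.sum_univ_eq_sum_range (fun i => g (i + 1) - g i)]
    have : r - K = ∑ i : Fin r, (if cond i then 0 else 1) := by
      rw [Finset.sum_ite, Finset.sum_const, Finset.sum_const]
      simp only [smul_eq_mul, mul_zero, mul_one, zero_add]
      rw [Finset.filter_not, Finset.card_sdiff_of_subset (Finset.filter_subset _ _)]
      simp [hK]
    rw [this]
    apply Finset.sum_le_sum
    intro i _
    by_cases hi : cond i
    · simp [hi, hstep_eq i hi]
    · simp only [if_neg hi]
      have := hstep_le i
      omega
  have hEr : E r = Finset.univ.image e := by
    ext a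
    simp [hE, Fin.is_lt]
  have hrle : r ≤ g r := by
    have hcard : (Finset.univ.image e).card = r := by
      rw [Finset.card_image_of_injective _ hinj, Finset.card_univ, Fintype.card_fin]
    have := M.le_rank_of_indep hind (show Finset.univ.image e ⊆ S ∪ E r by
      rw [hEr]; exact Finset.subset_union_right)
    rw [hcard] at this
    exact this
  have hg0 : g 0 ≤ S.card := by
    have : E 0 = ∅ := by simp [hE]
    calc g 0 = M.rank (S ∪ E 0) := rfl
      _ ≤ (S ∪ E 0).card := M.rank_le_card _
      _ = S.card := by rw [this, Finset.union_empty]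
  have hKr : K ≤ r := by
    calc K ≤ Finset.univ.card := Finset.card_filter_le _ _
      _ = r := by simp
  have hfinal : (Finset.univ.filter (fun i : Fin r =>
      e i ∈ M.span ((S ∪ ((Finset.univ.filter (fun j : Fin r => j < i)).image e)).erase (e i)))).card = K := by
    rw [hK]
    congr 1
  rw [hfinal]
  have hg0r : g 0 ≤ g r := hmono (Nat.zero_le r)
  omega


/-- Counting argument in the proof of Lemma FSZ16 2.1.1: if `e₁, …, e_r` are distinct
elements of `N` forming an independent set, each spanned by `(R ∩ N) ∪ {e₁, …, e_{i-1}}`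
with probability more than `c`, then `c · r < b · rank N`. -/
theorem stmt_7 {α : Type*} [DecidableEq α] [Fintype α] (M : FinMatroid α)
    (N : Finset α) (b c : ℝ) (hb : 0 < b) (hc : 0 < c)
    (x : α → ℝ) (hx0 : ∀ e : α, 0 ≤ x e) (hx1 : ∀ e : α, x e ≤ 1)
    (hxN : ∑ e ∈ N, x e ≤ b * (M.rank N : ℝ))
    (μ : Finset α → ℝ) (hμ0 : ∀ R : Finset α, 0 ≤ μ R) (hμ1 : ∑ R : Finset α, μ R = 1)
    (hmarg : ∀ e ∈ N, (∑ R : Finset α, if e ∈ R then μ R else 0) = x e)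
    (r : ℕ) (hr : 1 ≤ r) (e : Fin r → α) (hinj : Function.Injective e)
    (heN : ∀ i : Fin r, e i ∈ N)
    (hind : M.Indep (Finset.univ.image e))
    (hcond : ∀ i : Fin r,
      c < ∑ R : Finset α,
        if e i ∈ M.span (((R ∩ N) ∪ ((Finset.univ.filter (fun j : Fin r => j < i)).image e)).erase (e i))
        then μ R else 0) :
    c * (r : ℝ) < b * (M.rank N : ℝ) := by
  set P : Fin r → Finset α → Prop := fun i R =>
    e i ∈ M.span (((R ∩ N) ∪ ((Finset.univ.filter (fun j : Fin r => j < i)).image e)).erase (e i))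
    with hP
  have h1 : c * (r : ℝ) < ∑ i : Fin r, ∑ R : Finset α, (if P i R then μ R else 0) := by
    have hne : (Finset.univ : Finset (Fin r)).Nonempty := ⟨⟨0, hr⟩, Finset.mem_univ _⟩
    calc c * (r : ℝ) = ∑ _i : Fin r, c := by
          rw [Finset.sum_const, Finset.card_univ, Fintype.card_fin, nsmul_eq_mul, mul_comm]
      _ < _ := Finset.sum_lt_sum_of_nonempty hne fun i _ => hcond i
  have h2 : ∑ i : Fin r, ∑ R : Finset α, (if P i R then μ R else 0)
      = ∑ R : Finset α, ((Finset.univ.filter (fun i : Fin r => P i R)).card : ℝ) * μ R := by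
    rw [Finset.sum_comm]
    refine Finset.sum_congr rfl fun R _ => ?_
    rw [← Finset.sum_filter, Finset.sum_const, nsmul_eq_mul]
  have h3 : ∀ R : Finset α,
      ((Finset.univ.filter (fun i : Fin r => P i R)).card : ℝ) * μ R
        ≤ ((R ∩ N).card : ℝ) * μ R := by
    intro R
    have := key_count M (R ∩ N) r e hinj hind
    exact mul_le_mul_of_nonneg_right (by exact_mod_cast this) (hμ0 R)
  have h4 : ∑ R : Finset α, ((R ∩ N).card : ℝ) * μ R = ∑ a ∈ N, x a := by
    have hcard : ∀ R : Finset α, ((R ∩ N).card : ℝ) * μ R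
        = ∑ a ∈ N, (if a ∈ R then μ R else 0) := by
      intro R
      rw [← Finset.sum_filter, Finset.sum_const, nsmul_eq_mul]
      congr 2
      rw [Finset.inter_comm]
      rfl
    calc ∑ R : Finset α, ((R ∩ N).card : ℝ) * μ R
        = ∑ R : Finset α, ∑ a ∈ N, (if a ∈ R then μ R else 0) :=
          Finset.sum_congr rfl fun R _ => hcard R
      _ = ∑ a ∈ N, ∑ R : Finset α, (if a ∈ R then μ R else 0) := Finset.sum_comm
      _ = ∑ a ∈ N, x a := Finset.sum_congr rfl fun a ha => hmarg a ha
  calc c * (r : ℝ) < ∑ R : Finset α, ((Finset.univ.filter (fun i : Fin r => P i R)).card : ℝ) * μ R := by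
        rw [← h2]; exact h1
    _ ≤ ∑ R : Finset α, ((R ∩ N).card : ℝ) * μ R := Finset.sum_le_sum fun R _ => h3 R
    _ = ∑ a ∈ N, x a := h4
    _ ≤ b * (M.rank N : ℝ) := hxN
end

section
/- Let M be a matroid on a finite ground set U, let L be a list enumerating every element of U exactly once (an arrival order), and let R ⊆ U. Define the greedy output A(R) ⊆ U as follows: starting from A = ∅, process the elements e of L in order, and add e to A whenever e ∈ R and A ∪ {e} is independent in M. Then every element e ∈ R with e ∉ span(R \ {e}) belongs to A(R); in particular, A(R) is independent in M. -/
open Classical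

namespace FinMatroid

variable {α : Type*} [DecidableEq α] [Fintype α]

/-- The greedy algorithm: process the elements of the list `L` in order, starting from
`∅`, and take an arriving element `e` whenever `e ∈ R` and this keeps the current set
independent. -/
noncomputable def greedy (M : FinMatroid α) (R : Finset α) (L : List α) : Finset α :=
  L.foldl (fun A e => if e ∈ R ∧ M.Indep (insert e A) then insert e A else A) ∅

end FinMatroid

namespace FinMatroid

variable {α : Type*} [DecidableEq α] [Fintype α] (M : FinMatroid α)

lemma card_le_rank' {I S : Finset α} (hI : M.Indep I) (hIS : I ⊆ S) : I.card ≤ M.rank S :=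
  Finset.le_sup (by simp [Finset.mem_filter, Finset.mem_powerset, hIS, hI])

lemma exists_rank_witness' (S : Finset α) :
    ∃ I, I ⊆ S ∧ M.Indep I ∧ I.card = M.rank S := by
  obtain ⟨I, hI, h⟩ := Finset.exists_mem_eq_sup (S.powerset.filter M.Indep)
    ⟨∅, by simp [M.indep_empty]⟩ Finset.card
  simp only [Finset.mem_filter, Finset.mem_powerset] at hI
  exact ⟨I, hI.1, hI.2, h.symm⟩

lemma indep_insert_of_rank_ne' {S I : Finset α} (e : α) (hIS : I ⊆ S) (hI : M.Indep I)
    (hcard : I.card = M.rank S) (hne : M.rank (insert e S) ≠ M.rank S) :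
    M.Indep (insert e I) := by
  have hle : M.rank S ≤ M.rank (insert e S) := by
    apply Finset.sup_mono
    intro x hx
    simp only [Finset.mem_filter, Finset.mem_powerset] at hx ⊢
    exact ⟨hx.1.trans (Finset.subset_insert _ _), hx.2⟩
  obtain ⟨J, hJS, hJ, hJcard⟩ := M.exists_rank_witness' (insert e S)
  obtain ⟨x, hxJ, hxI, hx⟩ := M.indep_exchange hI hJ (by omega)
  have hxe : x = e := by
    by_contra hxe
    have hxS : x ∈ S := by
      rcases Finset.mem_insert.mp (hJS hxJ) with h | h
      · exact absurd h hxe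
      · exact h
    have := M.card_le_rank' hx (Finset.insert_subset hxS hIS)
    rw [Finset.card_insert_of_notMem hxI] at this
    omega
  rwa [hxe] at hx

lemma exists_extension' {I T : Finset α} (hI : M.Indep I) (hIT : I ⊆ T) :
    ∃ J, I ⊆ J ∧ J ⊆ T ∧ M.Indep J ∧ J.card = M.rank T := by
  have key : ∀ n (I : Finset α), M.Indep I → I ⊆ T → M.rank T - I.card = n →
      ∃ J, I ⊆ J ∧ J ⊆ T ∧ M.Indep J ∧ J.card = M.rank T := by
    intro n
    induction n with
    | zero =>
      intro I hI hIT h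
      have := M.card_le_rank' hI hIT
      exact ⟨I, subset_refl _, hIT, hI, by omega⟩
    | succ n ih =>
      intro I hI hIT h
      obtain ⟨K, hKT, hK, hKcard⟩ := M.exists_rank_witness' T
      obtain ⟨x, hxK, hxI, hx⟩ := M.indep_exchange hI hK (by omega)
      obtain ⟨J, h1, h2, h3, h4⟩ := ih (insert x I) hx
        (Finset.insert_subset (hKT hxK) hIT)
        (by rw [Finset.card_insert_of_notMem hxI]; omega)
      exact ⟨J, (Finset.subset_insert x I).trans h1, h2, h3, h4⟩
  exact key _ I hI hIT rfl

lemma mem_span_of_dep' {A T : Finset α} (e : α) (hA : M.Indep A) (hAT : A ⊆ T)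
    (hdep : ¬ M.Indep (insert e A)) : e ∈ M.span T := by
  obtain ⟨J, hAJ, hJT, hJ, hJcard⟩ := M.exists_extension' hA hAT
  simp only [span, Finset.mem_filter, Finset.mem_univ, true_and]
  by_contra hne
  exact hdep (M.indep_subset (M.indep_insert_of_rank_ne' e hJT hJ hJcard hne)
    (Finset.insert_subset_insert _ hAJ))

lemma foldl_props' (R : Finset α) : ∀ (L : List α) (A : Finset α), M.Indep A → A ⊆ R →
    M.Indep (L.foldl (fun A e => if e ∈ R ∧ M.Indep (insert e A) then insert e A else A) A) ∧
    A ⊆ L.foldl (fun A e => if e ∈ R ∧ M.Indep (insert e A) then insert e A else A) A ∧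
    L.foldl (fun A e => if e ∈ R ∧ M.Indep (insert e A) then insert e A else A) A ⊆ R := by
  intro L
  induction L with
  | nil => intro A hA hAR; exact ⟨hA, subset_refl _, hAR⟩
  | cons a L ih =>
    intro A hA hAR
    simp only [List.foldl_cons]
    by_cases h : a ∈ R ∧ M.Indep (insert a A)
    · rw [if_pos h]
      obtain ⟨h1, h2, h3⟩ := ih (insert a A) h.2 (Finset.insert_subset h.1 hAR)
      exact ⟨h1, (Finset.subset_insert a A).trans h2, h3⟩
    · rw [if_neg h]; exact ih A hA hAR

lemma foldl_mem' (R : Finset α) (e : α) (heR : e ∈ R) (hspan : e ∉ M.span (R.erase e)) :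
    ∀ (L : List α) (A : Finset α), M.Indep A → A ⊆ R → e ∈ L →
    e ∈ L.foldl (fun A e => if e ∈ R ∧ M.Indep (insert e A) then insert e A else A) A := by
  intro L
  induction L with
  | nil => intro A _ _ h; simp at h
  | cons a L ih =>
    intro A hA hAR heL
    simp only [List.foldl_cons]
    by_cases hae : a = e
    · subst hae
      by_cases heA : a ∈ A
      · by_cases h : a ∈ R ∧ M.Indep (insert a A)
        · rw [if_pos h]
          exact (M.foldl_props' R L (insert a A) h.2
            (Finset.insert_subset h.1 hAR)).2.1 (Finset.mem_insert_self a A)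
        · rw [if_neg h]
          exact (M.foldl_props' R L A hA hAR).2.1 heA
      · have hsub : A ⊆ R.erase a := fun x hx =>
          Finset.mem_erase.mpr ⟨fun hxe => heA (hxe ▸ hx), hAR hx⟩
        have hind : M.Indep (insert a A) := by
          by_contra hdep
          exact hspan (M.mem_span_of_dep' a hA hsub hdep)
        rw [if_pos ⟨heR, hind⟩]
        exact (M.foldl_props' R L (insert a A) hind
          (Finset.insert_subset heR hAR)).2.1 (Finset.mem_insert_self a A)
    · have heL' : e ∈ L := by
        rcases List.mem_cons.mp heL with h | h
        · exact absurd h.symm hae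
        · exact h
      by_cases h : a ∈ R ∧ M.Indep (insert a A)
      · rw [if_pos h]
        exact ih (insert a A) h.2 (Finset.insert_subset h.1 hAR) heL'
      · rw [if_neg h]
        exact ih A hA hAR heL'

end FinMatroid

/-- Every element of `R` not spanned by the rest of `R` is accepted by the greedy
algorithm; in particular the greedy output is independent. -/
theorem stmt_12 {α : Type*} [DecidableEq α] [Fintype α] (M : FinMatroid α)
    (L : List α) (hnodup : L.Nodup) (hall : ∀ x : α, x ∈ L) (R : Finset α) :
    (∀ e ∈ R, e ∉ M.span (R.erase e) → e ∈ M.greedy R L) ∧ M.Indep (M.greedy R L) := by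
  constructor
  · intro e heR hspan
    exact M.foldl_mem' R e heR hspan L ∅ M.indep_empty (Finset.empty_subset R) (hall e)
  · exact (M.foldl_props' R L ∅ M.indep_empty (Finset.empty_subset R)).1
end
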